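/- The three states |ψ_0⟩ = √(2/11)|Φ_2⟩ ⊕ √(9/11)|Φ_9⟩, |ψ_1⟩ = √(2/11)γ₁(X_2⊗I)|Φ_2⟩ ⊕ √(9/11)(X_9³⊗I)|Φ_9⟩, |ψ_2⟩ = √(2/11)γ₂(Z_2⊗I)|Φ_2⟩ ⊕ √(9/11)(X_9⁶⊗I)|Φ_9⟩ are pairwise orthogonal unit vectors in ℂ¹¹ ⊗ ℂ¹¹, for any unit-modulus complex numbers γ₁, γ₂. -/

import Mathlib

open Complex

noncomputable def Xmat (k : ℕ) : Matrix (Fin k) (Fin k) ℂ :=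
  fun i j => if (i : ℕ) = ((j : ℕ) + 1) % k then 1 else 0

noncomputable def Zmat (k : ℕ) : Matrix (Fin k) (Fin k) ℂ :=
  Matrix.diagonal fun l => Complex.exp (2 * Real.pi * Complex.I * (l : ℕ) / (k : ℕ))

noncomputable def PhiME (k : ℕ) : EuclideanSpace ℂ (Fin k × Fin k) :=
  WithLp.toLp 2 fun p => if p.1 = p.2 then ((1 / Real.sqrt k : ℝ) : ℂ) else 0

noncomputable def opL {k : ℕ} (U : Matrix (Fin k) (Fin k) ℂ)
    (v : EuclideanSpace ℂ (Fin k × Fin k)) : EuclideanSpace ℂ (Fin k × Fin k) :=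
  WithLp.toLp 2 fun p => ∑ i, U p.1 i * v (i, p.2)

/-- Embedding of `ℂ² ⊗ ℂ²` into `ℂ¹¹ ⊗ ℂ¹¹` via `ℂ¹¹ = ℂ² ⊕ ℂ⁹` (indices 0,1). -/
noncomputable def lift2 (v : EuclideanSpace ℂ (Fin 2 × Fin 2)) :
    EuclideanSpace ℂ (Fin 11 × Fin 11) :=
  WithLp.toLp 2 fun p => if h : (p.1 : ℕ) < 2 ∧ (p.2 : ℕ) < 2 then v (⟨p.1, h.1⟩, ⟨p.2, h.2⟩) else 0

/-- Embedding of `ℂ⁹ ⊗ ℂ⁹` into `ℂ¹¹ ⊗ ℂ¹¹` via `ℂ¹¹ = ℂ² ⊕ ℂ⁹` (indices 2,…,10). -/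
noncomputable def lift9 (v : EuclideanSpace ℂ (Fin 9 × Fin 9)) :
    EuclideanSpace ℂ (Fin 11 × Fin 11) :=
  WithLp.toLp 2 fun p =>
    if h : 2 ≤ (p.1 : ℕ) ∧ 2 ≤ (p.2 : ℕ) then
      v (⟨(p.1 : ℕ) - 2, by have := p.1.isLt; omega⟩,
         ⟨(p.2 : ℕ) - 2, by have := p.2.isLt; omega⟩)
    else 0

noncomputable def psiState0 : EuclideanSpace ℂ (Fin 11 × Fin 11) :=
  (Real.sqrt (2 / 11) : ℂ) • lift2 (PhiME 2) + (Real.sqrt (9 / 11) : ℂ) • lift9 (PhiME 9)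

noncomputable def psiState1 (γ₁ : ℂ) : EuclideanSpace ℂ (Fin 11 × Fin 11) :=
  (Real.sqrt (2 / 11) : ℂ) • (γ₁ • lift2 (opL (Xmat 2) (PhiME 2)))
    + (Real.sqrt (9 / 11) : ℂ) • lift9 (opL (Xmat 9 ^ 3) (PhiME 9))

noncomputable def psiState2 (γ₂ : ℂ) : EuclideanSpace ℂ (Fin 11 × Fin 11) :=
  (Real.sqrt (2 / 11) : ℂ) • (γ₂ • lift2 (opL (Zmat 2) (PhiME 2)))
    + (Real.sqrt (9 / 11) : ℂ) • lift9 (opL (Xmat 9 ^ 6) (PhiME 9))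

/- ### Auxiliary lemmas -/

lemma PhiME_apply {k : ℕ} (p : Fin k × Fin k) :
    PhiME k p = if p.1 = p.2 then ((1 / Real.sqrt k : ℝ) : ℂ) else 0 := rfl

lemma Xpow_apply {k : ℕ} (hk : 0 < k) (a : ℕ) (i j : Fin k) :
    (Xmat k ^ a) i j = if (i : ℕ) = ((j : ℕ) + a) % k then 1 else 0 := by
  induction a generalizing i j with
  | zero => simp [Matrix.one_apply, Nat.mod_eq_of_lt j.isLt, Fin.ext_iff]
  | succ n ih =>
    rw [pow_succ, Matrix.mul_apply]
    have h1 : (((j : ℕ) + 1) % k) < k := Nat.mod_lt _ hk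
    rw [Finset.sum_eq_single (⟨((j : ℕ) + 1) % k, h1⟩ : Fin k)]
    · simp only [ih i ⟨((j : ℕ) + 1) % k, h1⟩, Xmat]
      have : ((( (j : ℕ) + 1) % k) + n) % k = ((j : ℕ) + (n + 1)) % k := by
        rw [Nat.mod_add_mod]; ring_nf
      simp [this]
    · intro b _ hb
      have : ¬ ((b : ℕ) = ((j : ℕ) + 1) % k) := by
        intro h; apply hb; exact Fin.ext h
      simp [Xmat, this]
    · simp

lemma opL_apply_Phi {k : ℕ} (U : Matrix (Fin k) (Fin k) ℂ) (p : Fin k × Fin k) :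
    opL U (PhiME k) p = U p.1 p.2 * ((1 / Real.sqrt k : ℝ) : ℂ) := by
  unfold opL PhiME
  simp only [WithLp.ofLp_toLp]
  rw [Finset.sum_eq_single p.2]
  · simp
  · intro b _ hb; simp [hb]
  · simp

lemma opLX_apply {k : ℕ} (hk : 0 < k) (a : ℕ) (p : Fin k × Fin k) :
    opL (Xmat k ^ a) (PhiME k) p
      = if (p.1 : ℕ) = ((p.2 : ℕ) + a) % k then ((1 / Real.sqrt k : ℝ) : ℂ) else 0 := by
  rw [opL_apply_Phi, Xpow_apply hk]
  split <;> simp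

lemma PhiME_eq_opL {k : ℕ} (hk : 0 < k) : PhiME k = opL (Xmat k ^ 0) (PhiME k) := by
  ext p
  rw [opLX_apply hk]
  simp [PhiME, Nat.mod_eq_of_lt p.2.isLt, Fin.ext_iff]

lemma inner_opLX {k : ℕ} (hk : 0 < k) (a b : ℕ) :
    (inner ℂ (opL (Xmat k ^ a) (PhiME k)) (opL (Xmat k ^ b) (PhiME k)) : ℂ)
      = if a % k = b % k then 1 else 0 := by
  rw [PiLp.inner_apply]
  have key : ∀ p : Fin k × Fin k, (starRingEnd ℂ) (opL (Xmat k ^ a) (PhiME k) p) * (opL (Xmat k ^ b) (PhiME k) p)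
      = (if (p.1 : ℕ) = ((p.2 : ℕ) + a) % k then (1:ℂ) else 0)
        * (if (p.1 : ℕ) = ((p.2 : ℕ) + b) % k then (1:ℂ) else 0) * ((1 / (k:ℝ)) : ℂ) := by
    intro p
    rw [opLX_apply hk, opLX_apply hk]
    have hs : ((1 / Real.sqrt k : ℝ) : ℂ) * ((1 / Real.sqrt k : ℝ) : ℂ) = ((1 / (k:ℝ)) : ℂ) := by
      rw [← ofReal_mul, div_mul_div_comm, one_mul, Real.mul_self_sqrt (Nat.cast_nonneg k)]
      push_cast
      ring
    split <;> split <;> simp_all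
  simp only [RCLike.inner_apply', key]
  rw [Fintype.sum_prod_type_right]
  have inner_sum : ∀ p2 : Fin k,
      (∑ p1 : Fin k, (if (p1 : ℕ) = ((p2 : ℕ) + a) % k then (1:ℂ) else 0)
        * (if (p1 : ℕ) = ((p2 : ℕ) + b) % k then (1:ℂ) else 0) * ((1 / (k:ℝ)) : ℂ))
      = (if a % k = b % k then (1:ℂ) else 0) * ((1 / (k:ℝ)) : ℂ) := by
    intro p2
    have hlt : ((p2 : ℕ) + a) % k < k := Nat.mod_lt _ hk
    rw [Finset.sum_eq_single (⟨((p2 : ℕ) + a) % k, hlt⟩ : Fin k)]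
    · have hiff : (((p2:ℕ) + a) % k = ((p2:ℕ) + b) % k) ↔ (a % k = b % k) := by
        constructor
        · intro h; exact Nat.ModEq.add_left_cancel' (p2:ℕ) h
        · intro h; exact Nat.ModEq.add_left (p2:ℕ) h
      simp only [hiff]
      by_cases h : a % k = b % k <;> simp [h]
    · intro c _ hc
      have : ¬ ((c:ℕ) = ((p2:ℕ) + a) % k) := fun h => hc (Fin.ext h)
      simp [this]
    · simp
  simp only [inner_sum]
  rw [Finset.sum_const, Finset.card_univ, Fintype.card_fin, nsmul_eq_mul]
  have hk' : (k:ℂ) ≠ 0 := Nat.cast_ne_zero.mpr hk.ne'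
  push_cast
  field_simp

lemma inner_lift2 (v w : EuclideanSpace ℂ (Fin 2 × Fin 2)) :
    (inner ℂ (lift2 v) (lift2 w) : ℂ) = inner ℂ v w := by
  rw [PiLp.inner_apply, PiLp.inner_apply]
  simp only [RCLike.inner_apply]
  rw [Fintype.sum_prod_type, Fintype.sum_prod_type]
  norm_num [lift2, Fin.sum_univ_succ]
  rfl

lemma inner_lift9 (v w : EuclideanSpace ℂ (Fin 9 × Fin 9)) :
    (inner ℂ (lift9 v) (lift9 w) : ℂ) = inner ℂ v w := by
  rw [PiLp.inner_apply, PiLp.inner_apply]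
  simp only [RCLike.inner_apply]
  rw [Fintype.sum_prod_type, Fintype.sum_prod_type]
  norm_num [lift9, Fin.sum_univ_succ]
  rfl

lemma inner_lift2_lift9 (v : EuclideanSpace ℂ (Fin 2 × Fin 2)) (w : EuclideanSpace ℂ (Fin 9 × Fin 9)) :
    (inner ℂ (lift2 v) (lift9 w) : ℂ) = 0 := by
  rw [PiLp.inner_apply]
  simp only [RCLike.inner_apply]
  rw [Fintype.sum_prod_type]
  norm_num [lift2, lift9, Fin.sum_univ_succ]

lemma inner_lift9_lift2 (v : EuclideanSpace ℂ (Fin 9 × Fin 9)) (w : EuclideanSpace ℂ (Fin 2 × Fin 2)) :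
    (inner ℂ (lift9 v) (lift2 w) : ℂ) = 0 := by
  rw [PiLp.inner_apply]
  simp only [RCLike.inner_apply]
  rw [Fintype.sum_prod_type]
  norm_num [lift2, lift9, Fin.sum_univ_succ]

/- Zmat 2 entries -/
lemma Zmat2_apply (i j : Fin 2) :
    Zmat 2 i j = if i = j then (if (i:ℕ) = 0 then 1 else -1) else 0 := by
  fin_cases i <;> fin_cases j <;>
    simp [Zmat, Matrix.diagonal] <;>
  · rw [show 2 * (Real.pi:ℂ) * I / 2 = ↑Real.pi * I by ring]
    exact Complex.exp_pi_mul_I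

lemma sqrt2_sq : ((1 / Real.sqrt 2 : ℝ) : ℂ) * ((1 / Real.sqrt 2 : ℝ) : ℂ) = (1/2 : ℂ) := by
  rw [← ofReal_mul, div_mul_div_comm, one_mul, Real.mul_self_sqrt (by norm_num)]
  norm_num

lemma inner_Phi2_Z : (inner ℂ (PhiME 2) (opL (Zmat 2) (PhiME 2)) : ℂ) = 0 := by
  rw [PiLp.inner_apply]
  simp only [RCLike.inner_apply]
  rw [Fintype.sum_prod_type]
  simp [Fin.sum_univ_succ, opL_apply_Phi, Zmat2_apply, PhiME_apply]

lemma inner_X2_Z : (inner ℂ (opL (Xmat 2) (PhiME 2)) (opL (Zmat 2) (PhiME 2)) : ℂ) = 0 := by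
  rw [PiLp.inner_apply]
  simp only [RCLike.inner_apply]
  rw [Fintype.sum_prod_type]
  simp [Fin.sum_univ_succ, opL_apply_Phi, Zmat2_apply, Xmat]

lemma inner_Z_Z : (inner ℂ (opL (Zmat 2) (PhiME 2)) (opL (Zmat 2) (PhiME 2)) : ℂ) = 1 := by
  rw [PiLp.inner_apply]
  simp only [RCLike.inner_apply]
  rw [Fintype.sum_prod_type]
  have hs : ((Real.sqrt 2 : ℝ) : ℂ)⁻¹ * ((Real.sqrt 2 : ℝ) : ℂ)⁻¹ = (2 : ℂ)⁻¹ := by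
    rw [← mul_inv, ← ofReal_mul, Real.mul_self_sqrt (by norm_num)]
    norm_num
  simp [Fin.sum_univ_succ, opL_apply_Phi, Zmat2_apply, hs]
  norm_num

/- values of X-type inner products -/
lemma inner_Phi_opLX {k : ℕ} (hk : 0 < k) (b : ℕ) :
    (inner ℂ (PhiME k) (opL (Xmat k ^ b) (PhiME k)) : ℂ) = if 0 % k = b % k then 1 else 0 := by
  have h := inner_opLX hk 0 b
  rwa [← PhiME_eq_opL hk] at h

lemma inner_Phi_Phi {k : ℕ} (hk : 0 < k) : (inner ℂ (PhiME k) (PhiME k) : ℂ) = 1 := by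
  have h := inner_Phi_opLX hk 0
  rw [← PhiME_eq_opL hk] at h
  simpa using h

lemma inner_Phi2_Phi2 : (inner ℂ (PhiME 2) (PhiME 2) : ℂ) = 1 := inner_Phi_Phi (by norm_num)

lemma inner_Phi2_X : (inner ℂ (PhiME 2) (opL (Xmat 2) (PhiME 2)) : ℂ) = 0 := by
  have h := inner_Phi_opLX (k := 2) (by norm_num) 1
  rw [pow_one] at h
  simpa using h

lemma inner_X_X : (inner ℂ (opL (Xmat 2) (PhiME 2)) (opL (Xmat 2) (PhiME 2)) : ℂ) = 1 := by
  have h := inner_opLX (k := 2) (by norm_num) 1 1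
  rw [pow_one] at h
  simpa using h

lemma inner_Phi9_Phi9 : (inner ℂ (PhiME 9) (PhiME 9) : ℂ) = 1 := inner_Phi_Phi (by norm_num)

lemma inner_Phi9_X3 : (inner ℂ (PhiME 9) (opL (Xmat 9 ^ 3) (PhiME 9)) : ℂ) = 0 := by
  have h := inner_Phi_opLX (k := 9) (by norm_num) 3
  simpa using h

lemma inner_Phi9_X6 : (inner ℂ (PhiME 9) (opL (Xmat 9 ^ 6) (PhiME 9)) : ℂ) = 0 := by
  have h := inner_Phi_opLX (k := 9) (by norm_num) 6
  simpa using h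

lemma inner_X3_X3 : (inner ℂ (opL (Xmat 9 ^ 3) (PhiME 9)) (opL (Xmat 9 ^ 3) (PhiME 9)) : ℂ) = 1 := by
  rw [inner_opLX (by norm_num)]; norm_num

lemma inner_X6_X6 : (inner ℂ (opL (Xmat 9 ^ 6) (PhiME 9)) (opL (Xmat 9 ^ 6) (PhiME 9)) : ℂ) = 1 := by
  rw [inner_opLX (by norm_num)]; norm_num

lemma inner_X3_X6 : (inner ℂ (opL (Xmat 9 ^ 3) (PhiME 9)) (opL (Xmat 9 ^ 6) (PhiME 9)) : ℂ) = 0 := by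
  rw [inner_opLX (by norm_num)]; norm_num

lemma inner_X_Phi2 : (inner ℂ (opL (Xmat 2) (PhiME 2)) (PhiME 2) : ℂ) = 0 := by
  rw [← inner_conj_symm, inner_Phi2_X, map_zero]

lemma inner_Z_Phi2 : (inner ℂ (opL (Zmat 2) (PhiME 2)) (PhiME 2) : ℂ) = 0 := by
  rw [← inner_conj_symm, inner_Phi2_Z, map_zero]

lemma inner_Z_X2 : (inner ℂ (opL (Zmat 2) (PhiME 2)) (opL (Xmat 2) (PhiME 2)) : ℂ) = 0 := by
  rw [← inner_conj_symm, inner_X2_Z, map_zero]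

lemma inner_X3_Phi9 : (inner ℂ (opL (Xmat 9 ^ 3) (PhiME 9)) (PhiME 9) : ℂ) = 0 := by
  rw [← inner_conj_symm, inner_Phi9_X3, map_zero]

lemma inner_X6_Phi9 : (inner ℂ (opL (Xmat 9 ^ 6) (PhiME 9)) (PhiME 9) : ℂ) = 0 := by
  rw [← inner_conj_symm, inner_Phi9_X6, map_zero]

lemma inner_X6_X3 : (inner ℂ (opL (Xmat 9 ^ 6) (PhiME 9)) (opL (Xmat 9 ^ 3) (PhiME 9)) : ℂ) = 0 := by
  rw [← inner_conj_symm, inner_X3_X6, map_zero]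

lemma s2_sq : ((Real.sqrt (2/11) : ℝ) : ℂ) * ((Real.sqrt (2/11) : ℝ) : ℂ) = (2/11 : ℂ) := by
  rw [← ofReal_mul, Real.mul_self_sqrt (by norm_num)]
  norm_num

lemma s9_sq : ((Real.sqrt (9/11) : ℝ) : ℂ) * ((Real.sqrt (9/11) : ℝ) : ℂ) = (9/11 : ℂ) := by
  rw [← ofReal_mul, Real.mul_self_sqrt (by norm_num)]
  norm_num

/-- `|ψ_0⟩, |ψ_1⟩, |ψ_2⟩` are pairwise orthogonal unit vectors in `ℂ¹¹ ⊗ ℂ¹¹`. -/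
theorem psiStates_orthonormal (γ₁ γ₂ : ℂ) (h₁ : ‖γ₁‖ = 1) (h₂ : ‖γ₂‖ = 1) :
    Orthonormal ℂ ![psiState0, psiState1 γ₁, psiState2 γ₂] := by
  have hg1 : (starRingEnd ℂ) γ₁ * γ₁ = 1 := by
    rw [mul_comm, Complex.mul_conj]
    norm_cast
    rw [Complex.normSq_eq_norm_sq, h₁]
    norm_num
  have hg2 : (starRingEnd ℂ) γ₂ * γ₂ = 1 := by
    rw [mul_comm, Complex.mul_conj]
    norm_cast
    rw [Complex.normSq_eq_norm_sq, h₂]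
    norm_num
  have hfin : (⟨2, by omega⟩ : Fin 3) = 2 := rfl
  rw [orthonormal_iff_ite]
  intro i j
  fin_cases i <;> fin_cases j <;>
    simp only [Matrix.cons_val_zero, Matrix.cons_val_one, Matrix.head_cons, Matrix.cons_val_fin_one,
      Fin.mk_zero, Fin.mk_one, psiState0, psiState1, psiState2,
      inner_add_left, inner_add_right, inner_smul_left, inner_smul_right,
      inner_lift2, inner_lift9, inner_lift2_lift9, inner_lift9_lift2,
      inner_Phi2_Phi2, inner_Phi2_X, inner_X_X, inner_Phi2_Z, inner_X2_Z, inner_Z_Z,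
      inner_Phi9_Phi9, inner_Phi9_X3, inner_Phi9_X6, inner_X3_X3, inner_X6_X6, inner_X3_X6,
      inner_X_Phi2, inner_Z_Phi2, inner_Z_X2, inner_X3_Phi9, inner_X6_Phi9, inner_X6_X3,
      hfin, Matrix.cons_val_two, Matrix.tail_cons,
      Complex.conj_ofReal, mul_zero, zero_mul, mul_one, add_zero, zero_add, smul_eq_mul]
  · simp only [if_true]
    linear_combination s2_sq + s9_sq
  · rw [if_neg (by decide)]
  · rw [if_neg (by decide)]
  · rw [if_neg (by decide)]
  · simp only [if_true]
    linear_combination (2/11 : ℂ) * hg1 + ((starRingEnd ℂ) γ₁ * γ₁) * s2_sq + s9_sq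
  · rw [if_neg (by decide)]
  · rw [if_neg (by decide)]
  · rw [if_neg (by decide)]
  · simp only [if_true]
    linear_combination (2/11 : ℂ) * hg2 + ((starRingEnd ℂ) γ₂ * γ₂) * s2_sq + s9_sq
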